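/- Under the same particle dynamics dX^{(i)}/dt = −(P*)^{-1}(X^{(i)} − x*) + (P^{xx})^{-1}(X^{(i)} − X̄), the empirical covariance satisfies the matrix ODE dP^{xx}/dt = −(P*)^{-1} P^{xx} − P^{xx} (P*)^{-1} + 2 I_n. -/

import Mathlib

open Matrix BigOperators

attribute [local instance] Matrix.normedAddCommGroup Matrix.normedSpace

section Aux

variable {n : ℕ}

lemma aux_mulVec_vecMulVec (A : Matrix (Fin n) (Fin n) ℝ) (y z : Fin n → ℝ) :
    vecMulVec (A *ᵥ y) z = A * vecMulVec y z := by
  ext a b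
  simp [Matrix.mul_apply, vecMulVec_apply, mulVec, dotProduct, Finset.sum_mul, mul_assoc]

lemma aux_vecMulVec_mulVec (A : Matrix (Fin n) (Fin n) ℝ) (y z : Fin n → ℝ) :
    vecMulVec y (A *ᵥ z) = vecMulVec y z * Aᵀ := by
  ext a b
  simp only [Matrix.mul_apply, vecMulVec_apply, mulVec, dotProduct, transpose_apply,
    Finset.mul_sum]
  exact Finset.sum_congr rfl fun k _ => by ring

lemma aux_hasDerivAt_vecMulVec {u v : ℝ → Fin n → ℝ} {u' v' : Fin n → ℝ} {t : ℝ}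
    (hu : HasDerivAt u u' t) (hv : HasDerivAt v v' t) :
    HasDerivAt (fun s => vecMulVec (u s) (v s))
      (vecMulVec u' (v t) + vecMulVec (u t) v') t := by
  refine hasDerivAt_pi.2 ?_
  intro a
  refine hasDerivAt_pi.2 ?_
  intro b
  have ha : HasDerivAt (fun s => u s a) (u' a) t := hasDerivAt_pi.1 hu a
  have hb : HasDerivAt (fun s => v s b) (v' b) t := hasDerivAt_pi.1 hv b
  simpa [vecMulVec_apply, mul_comm] using ha.fun_mul hb

end Aux

/-- Under the particle dynamics
`dXᵢ/dt = -(P*)⁻¹(Xᵢ - x*) + (Pˣˣ)⁻¹(Xᵢ - X̄)`, with `M ≥ n+1`, `P*` symmetric positive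
definite and the empirical covariance `Pˣˣ` invertible, the empirical covariance
satisfies `dPˣˣ/dt = -(P*)⁻¹ Pˣˣ - Pˣˣ (P*)⁻¹ + 2 Iₙ`. -/
theorem empirical_covariance_dynamics (n M : ℕ) (hM : n + 1 ≤ M)
    (Pstar : Matrix (Fin n) (Fin n) ℝ) (hPstar : Pstar.PosDef) (xstar : Fin n → ℝ)
    (X : ℝ → Fin M → (Fin n → ℝ))
    (Xbar : ℝ → (Fin n → ℝ)) (hXbar : ∀ t, Xbar t = (M : ℝ)⁻¹ • ∑ i, X t i)
    (Pxx : ℝ → Matrix (Fin n) (Fin n) ℝ)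
    (hPxx : ∀ t, Pxx t = (M : ℝ)⁻¹ • ∑ i, vecMulVec (X t i - Xbar t) (X t i - Xbar t))
    (hPxx_inv : ∀ t, IsUnit (Pxx t))
    (hODE : ∀ i t, HasDerivAt (fun s => X s i)
      (-(Pstar⁻¹ *ᵥ (X t i - xstar)) + (Pxx t)⁻¹ *ᵥ (X t i - Xbar t)) t) :
    ∀ t, HasDerivAt Pxx (-(Pstar⁻¹ * Pxx t) - Pxx t * Pstar⁻¹ + (2 : ℝ) • 1) t := by
  intro t
  have hM0 : (M : ℝ) ≠ 0 := Nat.cast_ne_zero.mpr (by omega)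
  set Y : Fin M → (Fin n → ℝ) := fun i => X t i - Xbar t with hY
  set A : Matrix (Fin n) (Fin n) ℝ := (Pxx t)⁻¹ - Pstar⁻¹ with hA
  -- the deviations sum to zero
  have hsumY : ∑ i, Y i = 0 := by
    simp only [hY, Finset.sum_sub_distrib, Finset.sum_const, Finset.card_univ,
      Fintype.card_fin]
    rw [hXbar t, ← Nat.cast_smul_eq_nsmul ℝ M, smul_smul, mul_inv_cancel₀ hM0, one_smul,
      sub_self]
  -- derivative of the mean
  have hXbar' : HasDerivAt Xbar (-(Pstar⁻¹ *ᵥ (Xbar t - xstar))) t := by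
    have h1 : HasDerivAt (fun s => ∑ i, X s i)
        (∑ i, (-(Pstar⁻¹ *ᵥ (X t i - xstar)) + (Pxx t)⁻¹ *ᵥ (X t i - Xbar t))) t :=
      HasDerivAt.fun_sum fun i _ => hODE i t
    have h2 := h1.const_smul ((M : ℝ)⁻¹)
    have hs2 : ∑ i, (Pxx t)⁻¹ *ᵥ (X t i - Xbar t) = 0 := by
      simp_rw [← mulVecLin_apply, ← map_sum]
      rw [show (∑ i, (X t i - Xbar t)) = ∑ i, Y i from rfl, hsumY, map_zero]
    have hs1 : (M : ℝ)⁻¹ • ∑ i, Pstar⁻¹ *ᵥ (X t i - xstar)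
        = Pstar⁻¹ *ᵥ (Xbar t - xstar) := by
      simp_rw [← mulVecLin_apply, ← map_sum, ← _root_.map_smul]
      congr 1
      simp only [Finset.sum_sub_distrib, Finset.sum_const, Finset.card_univ,
        Fintype.card_fin, smul_sub, hXbar t]
      rw [← Nat.cast_smul_eq_nsmul ℝ M xstar, smul_smul, inv_mul_cancel₀ hM0, one_smul]
    rw [Finset.sum_add_distrib, Finset.sum_neg_distrib, smul_add, hs2, smul_zero, add_zero,
      smul_neg, hs1] at h2
    exact h2.congr_of_eventuallyEq (Filter.Eventually.of_forall fun s => hXbar s)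
  -- derivative of the deviations
  have hY' : ∀ i, HasDerivAt (fun s => X s i - Xbar s) (A *ᵥ Y i) t := by
    intro i
    have h := (hODE i t).fun_sub hXbar'
    refine h.congr_deriv ?_
    simp only [hA, hY, Matrix.sub_mulVec, Matrix.mulVec_sub]
    abel
  -- derivative of each rank-one term
  have hvec : ∀ i, HasDerivAt (fun s => vecMulVec (X s i - Xbar s) (X s i - Xbar s))
      (vecMulVec (A *ᵥ Y i) (Y i) + vecMulVec (Y i) (A *ᵥ Y i)) t :=
    fun i => aux_hasDerivAt_vecMulVec (hY' i) (hY' i)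
  -- derivative of the empirical covariance
  have hP : HasDerivAt Pxx
      ((M : ℝ)⁻¹ • ∑ i, (vecMulVec (A *ᵥ Y i) (Y i) + vecMulVec (Y i) (A *ᵥ Y i))) t := by
    have hfun : Pxx = fun s => (M : ℝ)⁻¹ • ∑ i,
        vecMulVec (X s i - Xbar s) (X s i - Xbar s) := funext hPxx
    rw [hfun]
    exact (HasDerivAt.fun_sum fun i _ => hvec i).fun_const_smul _
  convert hP using 1
  -- compute the derivative value
  have hstep : (M : ℝ)⁻¹ • ∑ i, (vecMulVec (A *ᵥ Y i) (Y i) + vecMulVec (Y i) (A *ᵥ Y i))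
      = A * Pxx t + Pxx t * Aᵀ := by
    simp_rw [aux_mulVec_vecMulVec, aux_vecMulVec_mulVec]
    rw [Finset.sum_add_distrib, ← Finset.mul_sum, ← Finset.sum_mul, smul_add, hPxx t,
      mul_smul_comm, smul_mul_assoc]
  rw [hstep]
  -- symmetry facts
  have hPxxT : (Pxx t)ᵀ = Pxx t := by
    rw [hPxx t, transpose_smul, Matrix.transpose_sum]
    congr 1
    refine Finset.sum_congr rfl fun i _ => ?_
    ext a b
    simp [vecMulVec_apply, mul_comm]
  have hPstarT : Pstarᵀ = Pstar := by
    have := hPstar.1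
    rwa [Matrix.IsHermitian, conjTranspose_eq_transpose_of_trivial] at this
  have hAT : Aᵀ = A := by
    rw [hA, transpose_sub, Matrix.transpose_nonsing_inv, Matrix.transpose_nonsing_inv,
      hPxxT, hPstarT]
  have hdet : IsUnit (Pxx t).det := (Matrix.isUnit_iff_isUnit_det _).1 (hPxx_inv t)
  rw [hAT, hA, Matrix.sub_mul, Matrix.mul_sub, Matrix.nonsing_inv_mul _ hdet,
    Matrix.mul_nonsing_inv _ hdet, two_smul]
  abel
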